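/- Let C_f stably compute f : ℕ^d → ℕ, and suppose that for every CRN C_g stably computing some g : ℕ → ℕ, the concatenated CRN C_{g∘f} stably computes the composition g ∘ f. Then the CRN obtained from C_f by deleting every reaction whose reactant vector has positive count of the output species still stably computes f (and is output-oblivious). -/

import Mathlib

/-- A chemical reaction network with species type `σ`, designated input species
`inputs i` for each of the `d` inputs, an output species, and a leader species. -/
structure CRN (d : ℕ) (σ : Type) [Fintype σ] [DecidableEq σ] where
  /-- Each reaction is a pair `(r, p)` of reactant counts and product counts. -/
  reactions : Finset ((σ → ℕ) × (σ → ℕ))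
  inputs : Fin d → σ
  output : σ
  leader : σ
  inputs_inj : Function.Injective inputs
  leader_not_input : ∀ i, inputs i ≠ leader

namespace CRN

variable {d : ℕ} {σ : Type} [Fintype σ] [DecidableEq σ]

/-- One reaction step: some reaction `(r, p)` with `r ≤ c` pointwise fires,
yielding `c - r + p`. -/
def Step (C : CRN d σ) (c c' : σ → ℕ) : Prop :=
  ∃ rp ∈ C.reactions, rp.1 ≤ c ∧ c' = c - rp.1 + rp.2

/-- Reachability by a finite sequence of reaction steps. -/
def Reachable (C : CRN d σ) : (σ → ℕ) → (σ → ℕ) → Prop :=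
  Relation.ReflTransGen C.Step

/-- The initial configuration encoding input `x`: count `x i` of input species
`inputs i`, count 1 of the leader, count 0 of everything else. -/
def init (C : CRN d σ) (x : Fin d → ℕ) : σ → ℕ :=
  fun s => (∑ i, if C.inputs i = s then x i else 0) + (if s = C.leader then 1 else 0)

/-- A configuration is stable if the output count never changes from it. -/
def Stable (C : CRN d σ) (c : σ → ℕ) : Prop :=
  ∀ c', C.Reachable c c' → c' C.output = c C.output

/-- `C` stably computes `f` if from every configuration reachable from an initial
configuration, a stable configuration with correct output count is reachable. -/
def StablyComputes (C : CRN d σ) (f : (Fin d → ℕ) → ℕ) : Prop :=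
  ∀ x c, C.Reachable (C.init x) c →
    ∃ o, C.Reachable c o ∧ C.Stable o ∧ o C.output = f x

/-- A CRN is output-oblivious if the output species is never a reactant. -/
def OutputOblivious (C : CRN d σ) : Prop :=
  ∀ rp ∈ C.reactions, rp.1 C.output = 0

/-- A CRN is output-monotonic if no reaction decreases the output species count. -/
def OutputMonotonic (C : CRN d σ) : Prop :=
  ∀ rp ∈ C.reactions, rp.1 C.output ≤ rp.2 C.output

end CRN

/-- `f` is obliviously-computable if some output-oblivious CRN stably computes it. -/
def ObliviouslyComputable {d : ℕ} (f : (Fin d → ℕ) → ℕ) : Prop :=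
  ∃ (n : ℕ) (C : CRN d (Fin n)), C.OutputOblivious ∧ C.StablyComputes f

/-- Push a count vector forward along a species renaming `e`. -/
def pushConfig {σ τ : Type} [Fintype σ] [DecidableEq τ] (e : σ → τ) (v : σ → ℕ) :
    τ → ℕ :=
  fun t => ∑ s, if e s = t then v s else 0

/-- The species of the concatenation of `Cf` and `Cg`: the species of `Cf`, the
species of `Cg` other than its input species (which is identified with the output
species of `Cf`), and a fresh leader (`none`). -/
abbrev ConcatSpecies {σf σg : Type} [Fintype σg] [DecidableEq σg]
    (Cg : CRN 1 σg) : Type :=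
  Option (σf ⊕ {t : σg // ¬ t = Cg.inputs 0})

/-- Embedding of the species of `Cf` into the concatenated species. -/
def embF {σf σg : Type} [Fintype σg] [DecidableEq σg] (Cg : CRN 1 σg) (s : σf) :
    ConcatSpecies (σf := σf) Cg :=
  some (Sum.inl s)

/-- Embedding of the species of `Cg` into the concatenated species: the input
species of `Cg` is renamed to the output species of `Cf`. -/
def embG {d : ℕ} {σf σg : Type} [Fintype σf] [DecidableEq σf] [Fintype σg]
    [DecidableEq σg] (Cf : CRN d σf) (Cg : CRN 1 σg) (s : σg) :
    ConcatSpecies (σf := σf) Cg :=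
  if h : s = Cg.inputs 0 then some (Sum.inl Cf.output) else some (Sum.inr ⟨s, h⟩)

/-- The concatenated CRN `C_{g∘f}`: the reactions of `Cf` and `Cg` (with the output
species of `Cf` renamed to match the input species of `Cg`, and all other species
disjoint), plus the reaction `L → L^f + L^g` for a fresh leader `L`.  Its inputs are
those of `Cf`, its output is that of `Cg`, and its leader is `L`. -/
def concatCRN {d : ℕ} {σf σg : Type} [Fintype σf] [DecidableEq σf] [Fintype σg]
    [DecidableEq σg] (Cf : CRN d σf) (Cg : CRN 1 σg) :
    CRN d (ConcatSpecies (σf := σf) Cg) where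
  reactions :=
    (Cf.reactions.image fun rp =>
      (pushConfig (embF Cg) rp.1, pushConfig (embF Cg) rp.2)) ∪
    (Cg.reactions.image fun rp =>
      (pushConfig (embG Cf Cg) rp.1, pushConfig (embG Cf Cg) rp.2)) ∪
    {(Pi.single none 1,
      Pi.single (embF Cg Cf.leader) 1 + Pi.single (embG Cf Cg Cg.leader) 1)}
  inputs := fun i => embF Cg (Cf.inputs i)
  output := embG Cf Cg Cg.output
  leader := none
  inputs_inj := by
    intro i j hij
    exact Cf.inputs_inj (by simpa [embF] using hij)
  leader_not_input := by
    intro i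
    simp [embF]

/-- The CRN obtained from `C` by deleting every reaction that consumes the output
species. -/
def removeOutputConsuming {d : ℕ} {σ : Type} [Fintype σ] [DecidableEq σ]
    (C : CRN d σ) : CRN d σ :=
  { C with reactions := C.reactions.filter fun rp => rp.1 C.output = 0 }

namespace CRNAux

open CRN

/-! ### The identity CRN -/

def idCRN : CRN 1 (Fin 3) where
  reactions := {(Pi.single 0 1, Pi.single 1 1)}
  inputs := fun _ => 0
  output := 1
  leader := 2
  inputs_inj := fun i j _ => Subsingleton.elim i j
  leader_not_input := fun _ => (by decide : (0 : Fin 3) ≠ 2)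

lemma idCRN_inputs (i : Fin 1) : idCRN.inputs i = 0 := rfl
@[simp] lemma idCRN_output : idCRN.output = 1 := rfl
@[simp] lemma idCRN_leader : idCRN.leader = 2 := rfl
@[simp] lemma idCRN_reactions : idCRN.reactions = {(Pi.single 0 1, Pi.single 1 1)} := rfl

lemma idCRN_step_iff {c c' : Fin 3 → ℕ} :
    idCRN.Step c c' ↔ 1 ≤ c 0 ∧ c' = c - Pi.single 0 1 + Pi.single 1 1 := by
  constructor
  · rintro ⟨rp, hrp, hle, rfl⟩
    simp only [idCRN_reactions, Finset.mem_singleton] at hrp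
    subst hrp
    refine ⟨?_, rfl⟩
    simpa using hle 0
  · rintro ⟨h1, rfl⟩
    refine ⟨(Pi.single 0 1, Pi.single 1 1), by simp, ?_, rfl⟩
    intro s
    by_cases hs : s = 0
    · subst hs; simpa using h1
    · simp [Pi.single_eq_of_ne hs]

lemma idCRN_invariant {x : Fin 1 → ℕ} {c : Fin 3 → ℕ}
    (h : idCRN.Reachable (idCRN.init x) c) : c 0 + c 1 = x 0 := by
  induction h with
  | refl => simp [CRN.init, Fin.sum_univ_one, idCRN_inputs]
  | tail h1 h2 ih =>
    rw [idCRN_step_iff] at h2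
    obtain ⟨hle, rfl⟩ := h2
    simp only [Pi.add_apply, Pi.sub_apply]
    have e0 : (Pi.single (0 : Fin 3) 1 : Fin 3 → ℕ) 0 = 1 := by simp
    have e1 : (Pi.single (0 : Fin 3) 1 : Fin 3 → ℕ) 1 = 0 := by simp
    have e2 : (Pi.single (1 : Fin 3) 1 : Fin 3 → ℕ) 0 = 0 := by simp
    have e3 : (Pi.single (1 : Fin 3) 1 : Fin 3 → ℕ) 1 = 1 := by simp
    rw [e0, e1, e2, e3]
    omega

lemma idCRN_drain : ∀ (k : ℕ) (c : Fin 3 → ℕ), c 0 = k →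
    ∃ o, idCRN.Reachable c o ∧ o 0 = 0 ∧ o 1 = c 1 + k := by
  intro k
  induction k with
  | zero => intro c hc; exact ⟨c, .refl, hc, rfl⟩
  | succ k ih =>
    intro c hc
    set c' : Fin 3 → ℕ := c - Pi.single 0 1 + Pi.single 1 1 with hc'
    have hstep : idCRN.Step c c' := idCRN_step_iff.2 ⟨by omega, rfl⟩
    have h0 : c' 0 = k := by simp [hc', Pi.sub_apply]; omega
    have h1 : c' 1 = c 1 + 1 := by
      simp [hc', Pi.sub_apply, Pi.single_eq_of_ne (by decide : (1:Fin 3) ≠ 0)]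
    obtain ⟨o, hro, ho0, ho1⟩ := ih c' h0
    exact ⟨o, .head hstep hro, ho0, by omega⟩

lemma idCRN_halt {c c' : Fin 3 → ℕ} (h0 : c 0 = 0) (h : idCRN.Reachable c c') : c' = c := by
  induction h using Relation.ReflTransGen.head_induction_on with
  | refl => rfl
  | head h' hrest ih =>
    exfalso
    rw [idCRN_step_iff] at h'
    omega

lemma idCRN_stablyComputes : idCRN.StablyComputes (fun x : Fin 1 → ℕ => x 0) := by
  intro x c hc
  have hinv := idCRN_invariant hc
  obtain ⟨o, hro, ho0, ho1⟩ := idCRN_drain (c 0) c rfl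
  refine ⟨o, hro, ?_, by simpa [ho1] using by omega⟩
  intro c' hc'
  rw [idCRN_halt ho0 hc']

end CRNAux

set_option linter.unusedSectionVars false
namespace CRNAux

open CRN

section Main

variable {d : ℕ} {σf : Type} [Fintype σf] [DecidableEq σf]

/-- The canonical form of configurations of the concatenated CRN:
`v` on the `Cf`-species, `n` copies of the output `Y`, one `L^g`, no fresh leader. -/
def phi (v : σf → ℕ) (n : ℕ) : ConcatSpecies (σf := σf) idCRN → ℕ
  | none => 0
  | some (Sum.inl s) => v s
  | some (Sum.inr t) => if t.1 = 1 then n else 1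

@[simp] lemma phi_inl (v : σf → ℕ) (n : ℕ) (s : σf) :
    phi v n (some (Sum.inl s)) = v s := rfl
@[simp] lemma phi_none (v : σf → ℕ) (n : ℕ) : phi v n none = 0 := rfl
@[simp] lemma phi_inr (v : σf → ℕ) (n : ℕ) (t) :
    phi v n (some (Sum.inr t)) = if t.1 = 1 then n else 1 := rfl

lemma fin3cases (t : {t : Fin 3 // ¬ t = idCRN.inputs 0}) : t.1 = 1 ∨ t.1 = 2 := by
  have h := t.2
  revert h
  have : ∀ u : Fin 3, ¬ u = idCRN.inputs 0 → (u = 1 ∨ u = 2) := by decide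
  exact this t.1

@[simp] lemma pushF_inl (v : σf → ℕ) (s : σf) :
    pushConfig (embF idCRN) v (some (Sum.inl s)) = v s := by
  simp [pushConfig, embF]

@[simp] lemma pushF_none (v : σf → ℕ) :
    pushConfig (embF (σf := σf) idCRN) v none = 0 := by
  simp [pushConfig, embF]

@[simp] lemma pushF_inr (v : σf → ℕ) (t) :
    pushConfig (embF (σf := σf) idCRN) v (some (Sum.inr t)) = 0 := by
  simp [pushConfig, embF]

lemma pushConfig_single {σ τ : Type} [Fintype σ] [DecidableEq σ] [DecidableEq τ]
    (e : σ → τ) (a : σ) (k : ℕ) :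
    pushConfig e (Pi.single a k) = fun t => if t = e a then k else 0 := by
  funext t
  simp only [pushConfig, Pi.single_apply]
  rw [Finset.sum_eq_single a]
  · by_cases h : e a = t <;> by_cases h' : t = e a <;> simp_all
  · intro b _ hb; simp [hb]
  · simp

variable (Cf : CRN d σf)

lemma embG_zero : embG Cf idCRN 0 = some (Sum.inl Cf.output) := by
  rw [embG]
  exact dif_pos rfl

lemma embG_one : embG Cf idCRN 1 =
    some (Sum.inr ⟨1, by decide⟩) := by
  rw [embG, dif_neg]

lemma embG_two : embG Cf idCRN 2 =
    some (Sum.inr ⟨2, by decide⟩) := by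
  rw [embG, dif_neg]

@[simp] lemma phi_output (v : σf → ℕ) (n : ℕ) :
    phi v n ((concatCRN Cf idCRN).output) = n := by
  show phi v n (embG Cf idCRN idCRN.output) = n
  rw [idCRN_output, embG_one]
  simp

end Main

end CRNAux

namespace CRNAux

open CRN

set_option linter.unusedSectionVars false

section Main2

variable {d : ℕ} {σf : Type} [Fintype σf] [DecidableEq σf] (Cf : CRN d σf)

/-- Notation shortcut: the conversion reactant/product in the concatenation. -/
lemma pushG_r : pushConfig (embG Cf idCRN) (Pi.single 0 1) =
    fun t => if t = some (Sum.inl Cf.output) then 1 else 0 := by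
  rw [pushConfig_single, embG_zero]

lemma pushG_p : pushConfig (embG Cf idCRN) (Pi.single 1 1) =
    fun t => if t = some (Sum.inr ⟨1, by decide⟩) then 1 else 0 := by
  rw [pushConfig_single, embG_one]

lemma phi_sub_add {v r p : σf → ℕ} (n : ℕ) (hr : r ≤ v) :
    phi v n - pushConfig (embF idCRN) r + pushConfig (embF idCRN) p
      = phi (v - r + p) n := by
  funext t
  match t with
  | none => simp
  | some (Sum.inl s) => simp
  | some (Sum.inr u) => simp

lemma lift_step {v v' : σf → ℕ} (h : Cf.Step v v') (n : ℕ) :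
    (concatCRN Cf idCRN).Step (phi v n) (phi v' n) := by
  obtain ⟨rp, hmem, hle, rfl⟩ := h
  refine ⟨(pushConfig (embF idCRN) rp.1, pushConfig (embF idCRN) rp.2), ?_, ?_, ?_⟩
  · exact Finset.mem_union_left _ (Finset.mem_union_left _
      (Finset.mem_image_of_mem _ hmem))
  · intro t
    match t with
    | none => simp
    | some (Sum.inl s) => simpa using hle s
    | some (Sum.inr u) => simp
  · exact (phi_sub_add n hle).symm

lemma convert_step {v : σf → ℕ} (h : 1 ≤ v Cf.output) (n : ℕ) :
    (concatCRN Cf idCRN).Step (phi v n) (phi (v - Pi.single Cf.output 1) (n + 1)) := by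
  refine ⟨(pushConfig (embG Cf idCRN) (Pi.single 0 1),
           pushConfig (embG Cf idCRN) (Pi.single 1 1)), ?_, ?_, ?_⟩
  · refine Finset.mem_union_left _ (Finset.mem_union_right _ ?_)
    exact Finset.mem_image_of_mem _
      (show (Pi.single 0 1, Pi.single 1 1) ∈ idCRN.reactions by simp)
  · rw [pushG_r]
    intro t
    by_cases ht : t = some (Sum.inl Cf.output)
    · subst ht; simpa using h
    · simp [ht]
  · rw [pushG_r, pushG_p]
    funext t
    match t with
    | none => simp
    | some (Sum.inl s) =>
      by_cases hs : s = Cf.output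
      · subst hs; simp
      · simp [hs, Pi.single_eq_of_ne hs]
    | some (Sum.inr u) =>
      rcases fin3cases u with hu | hu
      · have : u = (⟨1, by decide⟩ : {t : Fin 3 // ¬ t = idCRN.inputs 0}) :=
          Subtype.ext hu
        subst this
        simp
      · have h2 : u.1 ≠ 1 := by rw [hu]; decide
        have h3 : some (Sum.inr u) ≠ (some (Sum.inr ⟨1, by decide⟩) :
            ConcatSpecies (σf := σf) idCRN) := by
          simp only [ne_eq, Option.some.injEq, Sum.inr.injEq, Subtype.ext_iff]
          exact h2
        simp [h2, h3]

lemma leader_step (x : Fin d → ℕ) :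
    (concatCRN Cf idCRN).Step ((concatCRN Cf idCRN).init x) (phi (Cf.init x) 0) := by
  refine ⟨(Pi.single none 1,
      Pi.single (embF idCRN Cf.leader) 1 + Pi.single (embG Cf idCRN idCRN.leader) 1),
      ?_, ?_, ?_⟩
  · exact Finset.mem_union_right _ (Finset.mem_singleton_self _)
  · intro t
    by_cases ht : t = none
    · subst ht
      simp [CRN.init, concatCRN, embF]
    · simp [Pi.single_eq_of_ne ht]
  · funext t
    rw [idCRN_leader, embG_two]
    match t with
    | none =>
      simp [CRN.init, concatCRN, embF,
        Pi.single_eq_of_ne (by simp [embF] : (some (Sum.inl Cf.leader) :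
          ConcatSpecies (σf := σf) idCRN) ≠ none)]
    | some (Sum.inl s) =>
      simp only [Pi.add_apply, Pi.sub_apply, CRN.init, concatCRN, embF, phi_inl]
      have h1 : (Pi.single (none : ConcatSpecies (σf := σf) idCRN) 1 : ConcatSpecies (σf := σf) idCRN → ℕ)
          (some (Sum.inl s)) = 0 := by
        apply Pi.single_eq_of_ne; simp
      have h2 : (Pi.single (some (Sum.inl Cf.leader) : ConcatSpecies (σf := σf) idCRN) 1 : ConcatSpecies (σf := σf) idCRN → ℕ)
          (some (Sum.inl s)) = if s = Cf.leader then 1 else 0 := by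
        simp [Pi.single_apply]
      have h3 : (Pi.single (some (Sum.inr ⟨2, by decide⟩) : ConcatSpecies (σf := σf) idCRN) 1 : ConcatSpecies (σf := σf) idCRN → ℕ)
          (some (Sum.inl s)) = 0 := by
        apply Pi.single_eq_of_ne; simp
      rw [h1, h2, h3]
      simp
    | some (Sum.inr u) =>
      simp only [Pi.add_apply, Pi.sub_apply, CRN.init, concatCRN, embF, phi_inr]
      have h1 : (Pi.single (none : ConcatSpecies (σf := σf) idCRN) 1 : ConcatSpecies (σf := σf) idCRN → ℕ)
          (some (Sum.inr u)) = 0 := by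
        apply Pi.single_eq_of_ne; simp
      have h2 : (Pi.single (some (Sum.inl Cf.leader) : ConcatSpecies (σf := σf) idCRN) 1 : ConcatSpecies (σf := σf) idCRN → ℕ)
          (some (Sum.inr u)) = 0 := by
        apply Pi.single_eq_of_ne; simp
      have h3 : (Pi.single (some (Sum.inr ⟨2, by decide⟩) : ConcatSpecies (σf := σf) idCRN) 1 : ConcatSpecies (σf := σf) idCRN → ℕ)
          (some (Sum.inr u)) = if u.1 = 2 then 1 else 0 := by
        simp only [Pi.single_apply, Option.some.injEq, Sum.inr.injEq, Subtype.ext_iff]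
      rw [h1, h2, h3]
      rcases fin3cases u with hu | hu
      · simp [hu]
      · have : u.1 ≠ 1 := by rw [hu]; decide
        simp [hu, this]

end Main2

end CRNAux

namespace CRNAux

open CRN

set_option linter.unusedSectionVars false
set_option linter.unusedVariables false

section Main3

variable {d : ℕ} {σf : Type} [Fintype σf] [DecidableEq σf] (Cf : CRN d σf)

lemma step_inv {v : σf → ℕ} {n : ℕ} {e : ConcatSpecies (σf := σf) idCRN → ℕ}
    (h : (concatCRN Cf idCRN).Step (phi v n) e) :
    (∃ rp ∈ Cf.reactions, rp.1 ≤ v ∧ e = phi (v - rp.1 + rp.2) n) ∨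
    (1 ≤ v Cf.output ∧ e = phi (v - Pi.single Cf.output 1) (n + 1)) := by
  obtain ⟨rp, hmem, hle, rfl⟩ := h
  rcases Finset.mem_union.1 hmem with hm | hm
  · rcases Finset.mem_union.1 hm with hm' | hm'
    · -- a lifted Cf reaction
      obtain ⟨rp₀, hrp₀, rfl⟩ := Finset.mem_image.1 hm'
      left
      have hle' : rp₀.1 ≤ v := by
        intro s
        simpa using hle (some (Sum.inl s))
      refine ⟨rp₀, hrp₀, hle', ?_⟩
      exact (phi_sub_add n hle')
    · -- the conversion reaction
      obtain ⟨rp₀, hrp₀, rfl⟩ := Finset.mem_image.1 hm'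
      simp only [idCRN_reactions, Finset.mem_singleton] at hrp₀
      subst hrp₀
      right
      constructor
      · have := hle (some (Sum.inl Cf.output))
        rw [pushG_r] at this
        simpa using this
      · rw [pushG_r, pushG_p]
        symm
        funext t
        match t with
        | none => simp
        | some (Sum.inl s) =>
          by_cases hs : s = Cf.output
          · subst hs; simp
          · simp [hs, Pi.single_eq_of_ne hs]
        | some (Sum.inr u) =>
          rcases fin3cases u with hu | hu
          · have : u = (⟨1, by decide⟩ : {t : Fin 3 // ¬ t = idCRN.inputs 0}) :=
              Subtype.ext hu
            subst this
            simp
          · have h2 : u.1 ≠ 1 := by rw [hu]; decide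
            have h3 : some (Sum.inr u) ≠ (some (Sum.inr ⟨1, by decide⟩) :
                ConcatSpecies (σf := σf) idCRN) := by
              simp only [ne_eq, Option.some.injEq, Sum.inr.injEq, Subtype.ext_iff]
              exact h2
            simp [h2, h3]
  · -- the leader reaction: not applicable
    exfalso
    rw [Finset.mem_singleton] at hm
    have := hle none
    rw [hm] at this
    simpa using this

/-- `C'`: the CRN with output-consuming reactions removed. -/
lemma removed_step {v v' : σf → ℕ} (h : (removeOutputConsuming Cf).Step v v') :
    Cf.Step v v' := by
  obtain ⟨rp, hm, hle, rfl⟩ := h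
  exact ⟨rp, (Finset.mem_filter.1 hm).1, hle, rfl⟩

lemma lift_reach {v v' : σf → ℕ} (h : Cf.Reachable v v') (n : ℕ) :
    (concatCRN Cf idCRN).Reachable (phi v n) (phi v' n) := by
  induction h with
  | refl => exact .refl
  | tail h1 h2 ih => exact ih.tail (lift_step Cf h2 n)

/-- Zero out the output species. -/
def resetW (v : σf → ℕ) : σf → ℕ := fun s => if s = Cf.output then 0 else v s

@[simp] lemma resetW_output (v : σf → ℕ) : resetW Cf v Cf.output = 0 := by
  simp [resetW]

lemma convert_reach : ∀ (k : ℕ) (v : σf → ℕ), v Cf.output = k → ∀ n,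
    (concatCRN Cf idCRN).Reachable (phi v n) (phi (resetW Cf v) (n + k)) := by
  intro k
  induction k with
  | zero =>
    intro v hv n
    have : resetW Cf v = v := by
      funext s
      by_cases hs : s = Cf.output
      · subst hs; simp [resetW, hv]
      · simp [resetW, hs]
    rw [this]
    exact .refl
  | succ k ih =>
    intro v hv n
    have hstep := convert_step Cf (by omega : 1 ≤ v Cf.output) n
    have hW : (v - Pi.single Cf.output 1 : σf → ℕ) Cf.output = k := by
      simp only [Pi.sub_apply, Pi.single_eq_same]
      omega
    have hres : resetW Cf (v - Pi.single Cf.output 1) = resetW Cf v := by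
      funext s
      by_cases hs : s = Cf.output
      · subst hs; simp [resetW]
      · simp [resetW, hs, Pi.sub_apply, Pi.single_eq_of_ne hs]
    have := ih (v - Pi.single Cf.output 1) hW (n + 1)
    rw [hres] at this
    have harith : n + 1 + k = n + (k + 1) := by omega
    rw [harith] at this
    exact .head hstep this

lemma oblivious_mono {d' : ℕ} {σ : Type} [Fintype σ] [DecidableEq σ] (C : CRN d' σ)
    (h : C.OutputOblivious) {c c' : σ → ℕ} (hr : C.Reachable c c') :
    c C.output ≤ c' C.output := by
  induction hr with
  | refl => exact le_refl _
  | tail h1 h2 ih =>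
    obtain ⟨rp, hm, hle, rfl⟩ := h2
    have h0 := h rp hm
    calc c C.output ≤ _ := ih
    _ ≤ _ := by simp [Pi.add_apply, Pi.sub_apply, h0]

lemma concat_oblivious : (concatCRN Cf idCRN).OutputOblivious := by
  intro rp hmem
  have hout : (concatCRN Cf idCRN).output =
      some (Sum.inr ⟨1, by decide⟩) := by
    show embG Cf idCRN idCRN.output = _
    rw [idCRN_output, embG_one]
  rcases Finset.mem_union.1 hmem with hm | hm
  · rcases Finset.mem_union.1 hm with hm' | hm'
    · obtain ⟨rp₀, hrp₀, rfl⟩ := Finset.mem_image.1 hm'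
      rw [hout]
      simp
    · obtain ⟨rp₀, hrp₀, rfl⟩ := Finset.mem_image.1 hm'
      simp only [idCRN_reactions, Finset.mem_singleton] at hrp₀
      subst hrp₀
      rw [hout]
      simp only [pushG_r]
      simp
  · rw [Finset.mem_singleton] at hm
    rw [hm, hout]
    show (Pi.single (none : ConcatSpecies (σf := σf) idCRN) 1 :
        ConcatSpecies (σf := σf) idCRN → ℕ) (some (Sum.inr ⟨1, by decide⟩)) = 0
    apply Pi.single_eq_of_ne
    simp

lemma removed_oblivious : (removeOutputConsuming Cf).OutputOblivious := by
  intro rp hm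
  exact (Finset.mem_filter.1 hm).2

/-- Extraction: a path in the concatenation from a `W`-free configuration that
increases the output yields, in the pruned CRN, a path producing a new `W`. -/
lemma extract {v : σf → ℕ} {n : ℕ} {e : ConcatSpecies (σf := σf) idCRN → ℕ}
    (h : (concatCRN Cf idCRN).Reachable (phi v n) e)
    (he : n < e ((concatCRN Cf idCRN).output)) (hv : v Cf.output = 0) :
    ∃ v', (removeOutputConsuming Cf).Reachable v v' ∧ 1 ≤ v' Cf.output := by
  have key : ∀ a, (concatCRN Cf idCRN).Reachable a e →
      ∀ v n, a = phi v n → n < e ((concatCRN Cf idCRN).output) → v Cf.output = 0 →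
      ∃ v', (removeOutputConsuming Cf).Reachable v v' ∧ 1 ≤ v' Cf.output := by
    intro a ha
    induction ha using Relation.ReflTransGen.head_induction_on with
    | refl =>
      rintro v n rfl hlt hv
      rw [phi_output] at hlt
      omega
    | head h' hrest ih =>
      rintro v n rfl hlt hv
      rcases step_inv Cf h' with ⟨rp, hmem, hle, hc⟩ | ⟨h1, hc⟩
      · -- a Cf reaction fired; it cannot consume W since v W = 0
        have hrW : rp.1 Cf.output = 0 := by
          have h2 := Pi.le_def.1 hle Cf.output
          omega
        have hstep' : (removeOutputConsuming Cf).Step v (v - rp.1 + rp.2) :=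
          ⟨rp, Finset.mem_filter.2 ⟨hmem, hrW⟩, hle, rfl⟩
        rcases Nat.eq_zero_or_pos ((v - rp.1 + rp.2) Cf.output) with hz | hp
        · obtain ⟨v', hr', hW'⟩ := ih (v - rp.1 + rp.2) n hc hlt hz
          exact ⟨v', .head hstep' hr', hW'⟩
        · exact ⟨v - rp.1 + rp.2, Relation.ReflTransGen.single hstep', hp⟩
      · omega
  exact key _ h v n rfl he hv

end Main3

end CRNAux

namespace CRNAux

open CRN

set_option linter.unusedSectionVars false
set_option linter.unusedVariables false

section Main4

variable {d : ℕ} {σf : Type} [Fintype σf] [DecidableEq σf] (Cf : CRN d σf)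

/-- Add `k` copies of the output species. -/
def addW (v : σf → ℕ) (k : ℕ) : σf → ℕ := fun s => v s + if s = Cf.output then k else 0

lemma pad_step {v v' : σf → ℕ} (h : (removeOutputConsuming Cf).Step v v') (k : ℕ) :
    (removeOutputConsuming Cf).Step (addW Cf v k) (addW Cf v' k) := by
  obtain ⟨rp, hm, hle, rfl⟩ := h
  refine ⟨rp, hm, ?_, ?_⟩
  · intro s
    exact le_trans (Pi.le_def.1 hle s) (Nat.le_add_right _ _)
  · funext s
    have h1 := Pi.le_def.1 hle s
    simp only [addW, Pi.add_apply, Pi.sub_apply]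
    omega

lemma pad_reach {v v' : σf → ℕ} (h : (removeOutputConsuming Cf).Reachable v v') (k : ℕ) :
    (removeOutputConsuming Cf).Reachable (addW Cf v k) (addW Cf v' k) := by
  induction h with
  | refl => exact .refl
  | tail h1 h2 ih => exact ih.tail (pad_step Cf h2 k)

lemma addW_resetW (v : σf → ℕ) : addW Cf (resetW Cf v) (v Cf.output) = v := by
  funext s
  by_cases hs : s = Cf.output
  · subst hs; simp [addW, resetW]
  · simp [addW, resetW, hs]

variable {f : (Fin d → ℕ) → ℕ}
  (hD : (concatCRN Cf idCRN).StablyComputes f) {x : Fin d → ℕ}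

/-- Reaching the committed shadow configuration in the concatenation. -/
lemma reach_shadow {v : σf → ℕ} (hv : (removeOutputConsuming Cf).Reachable (Cf.init x) v) :
    (concatCRN Cf idCRN).Reachable ((concatCRN Cf idCRN).init x)
      (phi (resetW Cf v) (v Cf.output)) := by
  have h1 : Cf.Reachable (Cf.init x) v :=
    Relation.ReflTransGen.mono (fun a b hab => removed_step Cf hab) _ _ hv
  have h2 := lift_reach Cf h1 0
  have h3 := convert_reach Cf (v Cf.output) v rfl 0
  rw [Nat.zero_add] at h3
  exact .head (leader_step Cf x) (h2.trans h3)

include hD in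
lemma W_le {v : σf → ℕ} (hv : (removeOutputConsuming Cf).Reachable (Cf.init x) v) :
    v Cf.output ≤ f x := by
  obtain ⟨o, ho, hstab, hout⟩ := hD x _ (reach_shadow Cf hv)
  have hmono := oblivious_mono _ (concat_oblivious Cf) ho
  rw [phi_output] at hmono
  omega

include hD in
lemma progress {v : σf → ℕ} (hv : (removeOutputConsuming Cf).Reachable (Cf.init x) v)
    (hlt : v Cf.output < f x) :
    ∃ v', (removeOutputConsuming Cf).Reachable v v' ∧ v Cf.output < v' Cf.output := by
  obtain ⟨o, ho, hstab, hout⟩ := hD x _ (reach_shadow Cf hv)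
  have hgt : v Cf.output < o ((concatCRN Cf idCRN).output) := by omega
  obtain ⟨u, hu, huW⟩ := extract Cf ho hgt (resetW_output Cf v)
  refine ⟨addW Cf u (v Cf.output), ?_, ?_⟩
  · have := pad_reach Cf hu (v Cf.output)
    rwa [addW_resetW] at this
  · simp [addW]
    omega

include hD in
lemma loop : ∀ (j : ℕ) (v : σf → ℕ),
    (removeOutputConsuming Cf).Reachable (Cf.init x) v → f x ≤ v Cf.output + j →
    ∃ o, (removeOutputConsuming Cf).Reachable v o ∧ o Cf.output = f x := by
  intro j
  induction j with
  | zero =>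
    intro v hv hj
    have := W_le Cf hD hv
    exact ⟨v, .refl, by omega⟩
  | succ j ih =>
    intro v hv hj
    rcases lt_or_ge (v Cf.output) (f x) with hlt | hge
    · obtain ⟨v', hvv', hW⟩ := progress Cf hD hv hlt
      obtain ⟨o, h1, h2⟩ := ih v' (hv.trans hvv') (by omega)
      exact ⟨o, hvv'.trans h1, h2⟩
    · have := W_le Cf hD hv
      exact ⟨v, .refl, by omega⟩

end Main4

end CRNAux

/-- If `Cf` stably computes `f` and for every CRN `Cg` stably computing some
`g : ℕ → ℕ` the concatenated CRN stably computes `g ∘ f`, then deleting from `Cf`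
every reaction whose reactants include the output species yields a CRN that still
stably computes `f` (and is output-oblivious). -/
theorem composable_implies_outputOblivious {d : ℕ} {σf : Type} [Fintype σf]
    [DecidableEq σf] (Cf : CRN d σf) (f : (Fin d → ℕ) → ℕ)
    (hf : Cf.StablyComputes f)
    (hcomp : ∀ (σg : Type) [Fintype σg] [DecidableEq σg] (Cg : CRN 1 σg)
      (g : ℕ → ℕ), Cg.StablyComputes (fun x : Fin 1 → ℕ => g (x 0)) →
        (concatCRN Cf Cg).StablyComputes fun x => g (f x)) :
    (removeOutputConsuming Cf).StablyComputes f ∧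
      (removeOutputConsuming Cf).OutputOblivious := by
  have hid : CRNAux.idCRN.StablyComputes (fun x : Fin 1 → ℕ => id (x 0)) :=
    CRNAux.idCRN_stablyComputes
  have hD : (concatCRN Cf CRNAux.idCRN).StablyComputes f :=
    hcomp (Fin 3) CRNAux.idCRN id hid
  have hout : (removeOutputConsuming Cf).output = Cf.output := rfl
  constructor
  · intro x c hc
    have hc' : (removeOutputConsuming Cf).Reachable (Cf.init x) c := hc
    obtain ⟨o, h1, h2⟩ := CRNAux.loop Cf hD (f x) c hc' (by omega)
    refine ⟨o, h1, ?_, by rw [hout]; exact h2⟩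
    intro c' hrc'
    have hle1 := CRNAux.W_le Cf hD ((hc'.trans h1).trans hrc')
    have hle2 := CRNAux.oblivious_mono _ (CRNAux.removed_oblivious Cf) hrc'
    rw [hout] at hle2 ⊢
    omega
  · exact CRNAux.removed_oblivious Cf
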